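/- The four syzygy identities YP - ZR - TS = 0, (X - bT)P + aTR - ZS = 0, -cTP + (X + bT)R - YS = 0, and (cZ - bY)P + (aY - bZ)R + XS = 0 hold modulo F, where P = Z^2 + aT^2, R = ZY - T(X-bT), S = Z(X-bT) + aTY and F = X^2 + (ac-b^2)T^2 + aY^2 - 2bYZ + cZ^2. (The first two hold identically; the last two hold in ℂ[X,Y,Z,T,a,b,c]/(F).) -/
import Mathlib


/-- The four syzygy identities
`YP - ZR - TS = 0`, `(X-bT)P + aTR - ZS = 0`,
`-cTP + (X+bT)R - YS = 0`, `(cZ-bY)P + (aY-bZ)R + XS = 0`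
hold modulo `F = X² + (ac-b²)T² + aY² - 2bYZ + cZ²`, where
`P = Z² + aT²`, `R = ZY - T(X-bT)`, `S = Z(X-bT) + aTY`. -/
theorem stmt3 :
    let X : MvPolynomial (Fin 7) ℂ := MvPolynomial.X 0
    let Y : MvPolynomial (Fin 7) ℂ := MvPolynomial.X 1
    let Z : MvPolynomial (Fin 7) ℂ := MvPolynomial.X 2
    let T : MvPolynomial (Fin 7) ℂ := MvPolynomial.X 3
    let a : MvPolynomial (Fin 7) ℂ := MvPolynomial.X 4
    let b : MvPolynomial (Fin 7) ℂ := MvPolynomial.X 5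
    let c : MvPolynomial (Fin 7) ℂ := MvPolynomial.X 6
    let P := Z^2 + a*T^2
    let R := Z*Y - T*(X - b*T)
    let S := Z*(X - b*T) + a*T*Y
    let F := X^2 + (a*c - b^2)*T^2 + a*Y^2 - 2*b*Y*Z + c*Z^2
    (F ∣ (Y*P - Z*R - T*S)) ∧
    (F ∣ ((X - b*T)*P + a*T*R - Z*S)) ∧
    (F ∣ (-(c*T)*P + (X + b*T)*R - Y*S)) ∧
    (F ∣ ((c*Z - b*Y)*P + (a*Y - b*Z)*R + X*S)) := by
  intro X Y Z T a b c P R S F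
  exact ⟨⟨0, by ring⟩, ⟨0, by ring⟩, ⟨-T, by ring⟩, ⟨Z, by ring⟩⟩
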